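/- For all x, y ∈ ℝ and all n ≥ 0, the pseudo-distance satisfies d̃(fⁿ(x), fⁿ(y)) = (∏_{i=0}^{n−1} f′(f^i(x))) · d̃(x, y), where fⁿ denotes the n-th iterate of f. -/

import Mathlib

open MeasureTheory Filter Set


/-- For a differentiable bijection `f : ℝ → ℝ` with α-Hölder
derivative satisfying `1 < λ₋ ≤ f′ ≤ λ₊`, the pseudo-distance
`d̃(x, y) = ∫_x^y ρ_x(z) dz` satisfies
`d̃(fⁿ(x), fⁿ(y)) = (∏_{i=0}^{n−1} f′(fⁱ(x)))·d̃(x, y)` for all `n ≥ 0`. -/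
theorem stmt8
    (f : ℝ → ℝ) (hbij : Function.Bijective f)
    (hdiff : Differentiable ℝ f)
    (H α : ℝ) (hH : 0 ≤ H) (hα0 : 0 < α) (hα1 : α ≤ 1)
    (hHolder : ∀ x y : ℝ, |deriv f x - deriv f y| ≤ H * |x - y| ^ α)
    (lamm lamp : ℝ) (hlamm : 1 < lamm)
    (hderiv : ∀ x : ℝ, lamm ≤ deriv f x ∧ deriv f x ≤ lamp)
    (ρ : ℝ → ℝ → ℝ)
    (hρ : ∀ x y : ℝ,
      Filter.Tendsto
        (fun N : ℕ => ∏ n ∈ Finset.Icc 1 N,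
          deriv f ((Function.invFun f)^[n] x) / deriv f ((Function.invFun f)^[n] y))
        Filter.atTop (nhds (ρ x y))) :
    ∀ (x y : ℝ) (n : ℕ),
      (∫ z in (f^[n] x)..(f^[n] y), ρ (f^[n] x) z) =
        (∏ i ∈ Finset.range n, deriv f (f^[i] x)) * ∫ z in x..y, ρ x z := by
  have hinj : Function.Injective f := hbij.1
  have hpos : ∀ z : ℝ, 0 < deriv f z := fun z =>
    lt_of_lt_of_le (lt_trans one_pos hlamm) (hderiv z).1
  have hmono : StrictMono f := strictMono_of_deriv_pos hpos
  have hli : Function.LeftInverse (Function.invFun f) f :=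
    Function.leftInverse_invFun hinj
  have hit : ∀ (c : ℝ) (n : ℕ),
      (Function.invFun f)^[n + 1] (f c) = (Function.invFun f)^[n] c := fun c n => by
    rw [Function.iterate_succ_apply, hli c]
  -- cocycle identity
  have hk : ∀ a b : ℝ, ρ (f a) (f b) = deriv f a / deriv f b * ρ a b := by
    intro a b
    have key : ∀ N : ℕ,
        (∏ n ∈ Finset.Icc 1 (N + 1),
          deriv f ((Function.invFun f)^[n] (f a)) / deriv f ((Function.invFun f)^[n] (f b)))
        = deriv f a / deriv f b *
          ∏ n ∈ Finset.Icc 1 N,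
            deriv f ((Function.invFun f)^[n] a) / deriv f ((Function.invFun f)^[n] b) := by
      intro N
      induction N with
      | zero => simp [hli a, hli b]
      | succ N ih =>
          rw [Finset.prod_Icc_succ_top (by omega : 1 ≤ N + 1 + 1), ih,
            Finset.prod_Icc_succ_top (by omega : 1 ≤ N + 1), hit a (N + 1), hit b (N + 1)]
          ring
    have h1 : Tendsto (fun N : ℕ =>
        (∏ n ∈ Finset.Icc 1 (N + 1),
          deriv f ((Function.invFun f)^[n] (f a)) / deriv f ((Function.invFun f)^[n] (f b))))
        atTop (nhds (ρ (f a) (f b))) :=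
      (hρ (f a) (f b)).comp (tendsto_add_atTop_nat 1)
    have h2 : Tendsto (fun N : ℕ => deriv f a / deriv f b *
          ∏ n ∈ Finset.Icc 1 N,
            deriv f ((Function.invFun f)^[n] a) / deriv f ((Function.invFun f)^[n] b))
        atTop (nhds (deriv f a / deriv f b * ρ a b)) :=
      (hρ a b).const_mul _
    exact tendsto_nhds_unique (by simpa only [funext key] using h1) h2
  -- change of variables over Ioc
  have hIoc : ∀ p a b : ℝ, (∫ z in Set.Ioc (f a) (f b), ρ (f p) z)
      = ∫ z in Set.Ioc a b, deriv f z * ρ (f p) (f z) := by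
    intro p a b
    have himg : Set.Ioc (f a) (f b) = f '' Set.Ioc a b := by
      have := (StrictMono.orderIsoOfSurjective f hmono hbij.2).image_Ioc a b
      rw [StrictMono.coe_orderIsoOfSurjective] at this
      rw [this]
    rw [himg, integral_image_eq_integral_abs_deriv_smul measurableSet_Ioc
      (fun z _ => (hdiff z).hasDerivAt.hasDerivWithinAt) hinj.injOn]
    refine setIntegral_congr_fun measurableSet_Ioc fun z _ => ?_
    rw [smul_eq_mul, abs_of_pos (hpos z)]
  -- one step
  have hstep : ∀ a b : ℝ, (∫ z in (f a)..(f b), ρ (f a) z)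
      = deriv f a * ∫ z in a..b, ρ a z := by
    intro a b
    have hcongr : ∀ c d : ℝ, (∫ z in Set.Ioc c d, deriv f z * ρ (f a) (f z))
        = deriv f a * ∫ z in Set.Ioc c d, ρ a z := by
      intro c d
      rw [← MeasureTheory.integral_const_mul]
      refine setIntegral_congr_fun measurableSet_Ioc fun z _ => ?_
      rw [hk a z]
      field_simp
      exact mul_assoc (deriv f z) (deriv f a) (ρ a z) ▸ mul_div_cancel_left₀ _ (hpos z).ne'
    rcases le_total a b with h | h
    · rw [intervalIntegral.integral_of_le (hmono.le_iff_le.2 h),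
        intervalIntegral.integral_of_le h, hIoc a a b, hcongr]
    · rw [intervalIntegral.integral_of_ge (hmono.le_iff_le.2 h),
        intervalIntegral.integral_of_ge h, hIoc a b a, hcongr, mul_neg]
  intro x y n
  induction n with
  | zero => simp
  | succ n ih =>
      rw [Function.iterate_succ_apply' f n x, Function.iterate_succ_apply' f n y,
        hstep (f^[n] x) (f^[n] y), ih, Finset.prod_range_succ]
      ring
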